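/- Let 0<α₀<α₁<α₂ and take parameters (α₀,α₁,α₂,α₃)=(α₀,α₁,α₂,α₂). Suppose (x,y)∈ℝ⁴×ℝ⁴ satisfies C₁(x)=0, C₂(x,y)=0, x₁=0 and y₁=0. Then G=2α₂H/(α₂−α₀)−α₀J²/(α₂(α₂−α₀)), where H=½(y₀²+y₁²+y₂²+y₃²), J=x₂y₃−x₃y₂, and G=y₂²+y₃²+(x₀y₂−x₂y₀)²/(α₂−α₀)+(x₀y₃−x₃y₀)²/(α₂−α₀)+(x₁y₂−x₂y₁)²/(α₂−α₁)+(x₁y₃−x₃y₁)²/(α₂−α₁). -/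

import Mathlib

noncomputable section

/-- Points of `T*ℝⁿ = ℝⁿ × ℝⁿ`, written `(x, y)`. -/
abbrev Pt (n : ℕ) := (Fin n → ℝ) × (Fin n → ℝ)

/-- `D(x) = Σᵢ xᵢ²/αᵢ²`. -/
def Dq {n : ℕ} (α : Fin n → ℝ) (x : Fin n → ℝ) : ℝ := ∑ i, (x i)^2 / (α i)^2

/-- Partial derivative of `f` in the direction `xᵢ`. -/
def pdx {n : ℕ} (f : Pt n → ℝ) (p : Pt n) (i : Fin n) : ℝ :=
  fderiv ℝ f p (Pi.single i 1, 0)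

/-- Partial derivative of `f` in the direction `yᵢ`. -/
def pdy {n : ℕ} (f : Pt n → ℝ) (p : Pt n) (i : Fin n) : ℝ :=
  fderiv ℝ f p (0, Pi.single i 1)

/-- The Dirac bracket on `T*ℝⁿ` for the ellipsoid with semi-axes `√(αᵢ)`:
`{f,g} = Σᵢₖ (∂f/∂xᵢ ∂g/∂yₖ − ∂g/∂xᵢ ∂f/∂yₖ)(δᵢₖ − xᵢxₖ/(D αᵢ αₖ))
        − Σᵢₖ (∂f/∂yᵢ)(∂g/∂yₖ)(xᵢyₖ − xₖyᵢ)/(D αᵢ αₖ)`. -/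
def dirac {n : ℕ} (α : Fin n → ℝ) (f g : Pt n → ℝ) (p : Pt n) : ℝ :=
  (∑ i, ∑ k,
    (pdx f p i * pdy g p k - pdx g p i * pdy f p k) *
      ((if i = k then (1:ℝ) else 0) - p.1 i * p.1 k / (Dq α p.1 * α i * α k)))
  - ∑ i, ∑ k,
      pdy f p i * pdy g p k * (p.1 i * p.2 k - p.1 k * p.2 i) / (Dq α p.1 * α i * α k)

/-- The constraint `C₁(x) = Σᵢ xᵢ²/αᵢ − 1`. -/
def C1 {n : ℕ} (α : Fin n → ℝ) (x : Fin n → ℝ) : ℝ := (∑ i, (x i)^2 / α i) - 1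

/-- The constraint `C₂(x,y) = Σᵢ xᵢyᵢ/αᵢ`. -/
def C2 {n : ℕ} (α : Fin n → ℝ) (p : Pt n) : ℝ := ∑ i, p.1 i * p.2 i / α i

/-- The Hamiltonian `H = ½(y₀² + y₁² + y₂² + y₃²)`. -/
def H4 (p : Pt 4) : ℝ := (1/2) * ((p.2 0)^2 + (p.2 1)^2 + (p.2 2)^2 + (p.2 3)^2)

/-- The angular momentum `J₁ = x₀y₁ − x₁y₀`. -/
def Jmom1 (p : Pt 4) : ℝ := p.1 0 * p.2 1 - p.1 1 * p.2 0

/-- The angular momentum `J₂ = x₂y₃ − x₃y₂`. -/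
def Jmom2 (p : Pt 4) : ℝ := p.1 2 * p.2 3 - p.1 3 * p.2 2
/-- The integral `G = F₂ + F₃` of the 112 case:
`G = y₂² + y₃² + (x₀y₂−x₂y₀)²/(α₂−α₀) + (x₀y₃−x₃y₀)²/(α₂−α₀)
   + (x₁y₂−x₂y₁)²/(α₂−α₁) + (x₁y₃−x₃y₁)²/(α₂−α₁)`. -/
def G112 (α₀ α₁ α₂ : ℝ) (p : Pt 4) : ℝ :=
  (p.2 2)^2 + (p.2 3)^2
  + (p.1 0 * p.2 2 - p.1 2 * p.2 0)^2 / (α₂ - α₀)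
  + (p.1 0 * p.2 3 - p.1 3 * p.2 0)^2 / (α₂ - α₀)
  + (p.1 1 * p.2 2 - p.1 2 * p.2 1)^2 / (α₂ - α₁)
  + (p.1 1 * p.2 3 - p.1 3 * p.2 1)^2 / (α₂ - α₁)

/-- on the critical set `x₁ = y₁ = 0` of the 112-ellipsoid,
`G = 2α₂H/(α₂−α₀) − α₀J²/(α₂(α₂−α₀))`. -/
theorem stmt13 (α₀ α₁ α₂ : ℝ) (hα₀ : 0 < α₀) (hα₀₁ : α₀ < α₁) (hα₁₂ : α₁ < α₂)
    (p : Pt 4)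
    (hC1 : C1 ![α₀, α₁, α₂, α₂] p.1 = 0)
    (hC2 : C2 ![α₀, α₁, α₂, α₂] p = 0)
    (hx1 : p.1 1 = 0) (hy1 : p.2 1 = 0) :
    G112 α₀ α₁ α₂ p
      = 2 * α₂ * H4 p / (α₂ - α₀) - α₀ * (Jmom2 p)^2 / (α₂ * (α₂ - α₀)) := by
  have ha : α₂ - α₀ ≠ 0 := by linarith
  have hb : α₂ - α₁ ≠ 0 := by linarith
  have hc : α₂ ≠ 0 := by linarith
  have h0 : α₀ ≠ 0 := ne_of_gt hα₀
  simp only [C1, C2, Fin.sum_univ_four, Matrix.cons_val_zero, Matrix.cons_val_one,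
    Matrix.head_cons, Matrix.cons_val_two, Matrix.tail_cons, Matrix.cons_val_three] at hC1 hC2
  simp only [hx1, hy1] at hC1 hC2
  have hP : α₂ * (p.1 0)^2 + α₀ * ((p.1 2)^2 + (p.1 3)^2) - α₀ * α₂ = 0 := by
    field_simp at hC1; linear_combination hC1
  have hQ : α₂ * (p.1 0 * p.2 0) + α₀ * (p.1 2 * p.2 2 + p.1 3 * p.2 3) = 0 := by
    field_simp at hC2; linear_combination hC2
  unfold G112 H4 Jmom2
  simp only [hx1, hy1]
  linear_combination (norm := (field_simp; ring))
    ((α₀ * ((p.2 2)^2 + (p.2 3)^2) + α₂ * (p.2 0)^2) / (α₀ * α₂ * (α₂ - α₀))) * hP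
    - ((α₂ * (p.1 0 * p.2 0) + α₀ * (p.1 2 * p.2 2 + p.1 3 * p.2 3))
        / (α₀ * α₂ * (α₂ - α₀))) * hQ
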